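/- arXiv:1612.00930 — 2 statements merged into one kernel-verified Lean document; each statement's English description precedes it below -/
import Mathlib

section
/- For a finite group G, g ∈ G, and an integer k ≥ 1, every finite-dimensional irreducible complex representation of Λ^k_G(g) is of the form ρ⊙χ : [h, t] ↦ χ(t)·ρ(h) for a pair (ρ, χ), where ρ is a finite-dimensional irreducible complex representation of C_G(g) and χ : ℝ → ℂˣ is a group homomorphism with ρ(g) = χ(k)·id; moreover (ρ, χ) ↦ ρ⊙χ is a bijection between such pairs (with ρ taken up to isomorphism) and isomorphism classes of finite-dimensional irreducible complex representations of Λ^k_G(g). -/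
noncomputable section

/-- The element `g` as an element of its own centralizer. -/
def gElem {G : Type} [Group G] (g : G) : Subgroup.centralizer ({g} : Set G) :=
  ⟨g, by rw [Subgroup.mem_centralizer_iff]; rintro h rfl; rfl⟩

/-- The central element `(g, -k)` of `C_G(g) × ℝ`. -/
def zElem {G : Type} [Group G] (g : G) (k : ℤ) :
    Subgroup.centralizer ({g} : Set G) × Multiplicative ℝ :=
  (gElem g, Multiplicative.ofAdd (-(k : ℝ)))

theorem zElem_comm {G : Type} [Group G] (g : G) (k : ℤ)
    (x : Subgroup.centralizer ({g} : Set G) × Multiplicative ℝ) :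
    Commute x (zElem g k) := by
  have h1 : x.1 * gElem g = gElem g * x.1 := by
    apply Subtype.ext
    exact (Subgroup.mem_centralizer_iff.mp x.1.2 g rfl).symm
  exact Prod.ext h1 (mul_comm _ _)

/-- The subgroup of `C_G(g) × ℝ` generated by `(g, -k)`. -/
def lambdaRel {G : Type} [Group G] (g : G) (k : ℤ) :
    Subgroup (Subgroup.centralizer ({g} : Set G) × Multiplicative ℝ) :=
  Subgroup.zpowers (zElem g k)

instance lambdaRel_normal {G : Type} [Group G] (g : G) (k : ℤ) : (lambdaRel g k).Normal := by
  constructor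
  intro n hn x
  rw [lambdaRel, Subgroup.mem_zpowers_iff] at hn
  obtain ⟨m, rfl⟩ := hn
  have h := ((zElem_comm g k x).zpow_right m).eq
  rw [h, mul_inv_cancel_right]
  exact Subgroup.zpow_mem_zpowers _ m

/-- The group `Λ^k_G(g) = (C_G(g) × ℝ)/⟨(g,-k)⟩`. -/
def LambdaK (G : Type) [Group G] (g : G) (k : ℤ) : Type :=
  (Subgroup.centralizer ({g} : Set G) × Multiplicative ℝ) ⧸ lambdaRel g k

instance (G : Type) [Group G] (g : G) (k : ℤ) : Group (LambdaK G g k) :=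
  inferInstanceAs (Group ((Subgroup.centralizer ({g} : Set G) × Multiplicative ℝ) ⧸ lambdaRel g k))

/-- The group `Λ_G(g) = (C_G(g) × ℝ)/⟨(g,-1)⟩`. -/
abbrev Lambda (G : Type) [Group G] (g : G) : Type := LambdaK G g 1

/-- The class `[h, t]` in `Λ^k_G(g)`. -/
def lmk {G : Type} [Group G] {g : G} {k : ℤ} (h : Subgroup.centralizer ({g} : Set G))
    (t : ℝ) : LambdaK G g k :=
  QuotientGroup.mk (h, Multiplicative.ofAdd t)

end
noncomputable section

/-- A representation (valued in `GL(V)`) is irreducible: `V ≠ 0` and the only invariant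
subspaces are `⊥` and `⊤`. -/
def IsIrreducibleRep {M : Type} [Monoid M] {V : Type} [AddCommGroup V] [Module ℂ V]
    (rho : M →* (V →ₗ[ℂ] V)ˣ) : Prop :=
  (∃ v : V, v ≠ 0) ∧
    ∀ W : Submodule ℂ V,
      (∀ (m : M) (v : V), v ∈ W → (rho m : V →ₗ[ℂ] V) v ∈ W) → W = ⊥ ∨ W = ⊤

/-- Isomorphism of representations. -/
def RepIso {M : Type} [Monoid M] {V V' : Type} [AddCommGroup V] [Module ℂ V]
    [AddCommGroup V'] [Module ℂ V']
    (rho : M →* (V →ₗ[ℂ] V)ˣ) (rho' : M →* (V' →ₗ[ℂ] V')ˣ) : Prop :=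
  ∃ e : V ≃ₗ[ℂ] V',
    ∀ (m : M) (v : V), e ((rho m : V →ₗ[ℂ] V) v) = (rho' m : V' →ₗ[ℂ] V') (e v)

/-- `Rho = rho ⊙ chi` on `Λ^k_G(g)`, i.e. `Rho [h, t] = chi(t) • rho(h)`. -/
def SmashEqK {G : Type} [Group G] {g : G} {k : ℤ} {V : Type} [AddCommGroup V] [Module ℂ V]
    (Rho : LambdaK G g k →* (V →ₗ[ℂ] V)ˣ)
    (rho : Subgroup.centralizer ({g} : Set G) →* (V →ₗ[ℂ] V)ˣ)
    (chi : Multiplicative ℝ →* ℂˣ) : Prop :=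
  ∀ (h : Subgroup.centralizer ({g} : Set G)) (t : ℝ),
    (Rho (lmk h t) : V →ₗ[ℂ] V) =
      (chi (Multiplicative.ofAdd t) : ℂ) • (rho h : V →ₗ[ℂ] V)

/-- The compatibility condition `rho(g) = chi(k) • id`. -/
def SmashCondK {G : Type} [Group G] (g : G) (k : ℤ) {V : Type} [AddCommGroup V] [Module ℂ V]
    (rho : Subgroup.centralizer ({g} : Set G) →* (V →ₗ[ℂ] V)ˣ)
    (chi : Multiplicative ℝ →* ℂˣ) : Prop :=
  (rho (gElem g) : V →ₗ[ℂ] V) =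
    (chi (Multiplicative.ofAdd (k : ℝ)) : ℂ) • (LinearMap.id : V →ₗ[ℂ] V)

section Helpers

variable {G : Type} [Group G] {g : G} {k : ℤ}
variable {V : Type} [AddCommGroup V] [Module ℂ V]

lemma lmk_mul (h h' : Subgroup.centralizer ({g} : Set G)) (t t' : ℝ) :
    (lmk h t : LambdaK G g k) * lmk h' t' = lmk (h * h') (t + t') := by
  show QuotientGroup.mk _ * QuotientGroup.mk _ = _
  show QuotientGroup.mk ((h, Multiplicative.ofAdd t) * (h', Multiplicative.ofAdd t')) = _
  rfl

lemma lmk_surj (x : LambdaK G g k) :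
    ∃ (h : Subgroup.centralizer ({g} : Set G)) (t : ℝ), x = lmk h t := by
  obtain ⟨⟨h, t⟩, rfl⟩ := QuotientGroup.mk_surjective x
  exact ⟨h, Multiplicative.toAdd t, rfl⟩

lemma lmk_g : (lmk (gElem g) 0 : LambdaK G g k) = lmk 1 (k : ℝ) := by
  apply (QuotientGroup.eq (s := lambdaRel g k)).2
  have : (gElem g, Multiplicative.ofAdd (0:ℝ))⁻¹ * ((1 : Subgroup.centralizer ({g} : Set G)), Multiplicative.ofAdd (k:ℝ)) = (zElem g k)⁻¹ := by
    ext
    · simp [zElem]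
    · simp [zElem]
  rw [this]
  exact Subgroup.inv_mem _ (Subgroup.mem_zpowers _)

lemma smul_vec_eq {c c' : ℂ} {v : V} (hv : v ≠ 0) (h : c • v = c' • v) : c = c' := by
  by_contra hne
  have := sub_eq_zero.2 h
  rw [← sub_smul] at this
  rcases smul_eq_zero.1 this with h1 | h1
  · exact hne (sub_eq_zero.1 h1)
  · exact hv h1

/-- Schur: an endomorphism commuting with an irreducible rep is scalar. -/
lemma schur_scalar [FiniteDimensional ℂ V] {M : Type} [Monoid M]
    (Rho : M →* (V →ₗ[ℂ] V)ˣ) (hirr : IsIrreducibleRep Rho) (f : V →ₗ[ℂ] V)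
    (hf : ∀ m : M, f ∘ₗ (Rho m : V →ₗ[ℂ] V) = (Rho m : V →ₗ[ℂ] V) ∘ₗ f) :
    ∃ c : ℂ, f = c • (LinearMap.id : V →ₗ[ℂ] V) := by
  obtain ⟨⟨v0, hv0⟩, hW⟩ := hirr
  haveI : Nontrivial V := nontrivial_of_ne v0 0 hv0
  obtain ⟨c, hc⟩ := Module.End.exists_eigenvalue (f : Module.End ℂ V)
  refine ⟨c, ?_⟩
  set W := Module.End.eigenspace (f : Module.End ℂ V) c with hWdef
  have hWne : W ≠ ⊥ := hc
  have hWinv : ∀ (m : M) (v : V), v ∈ W → (Rho m : V →ₗ[ℂ] V) v ∈ W := by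
    intro m v hv
    rw [Module.End.mem_eigenspace_iff] at hv ⊢
    have := congrArg (fun φ => (φ : V →ₗ[ℂ] V) v) (hf m)
    simp only [LinearMap.comp_apply] at this
    rw [this, hv, map_smul]
  have : W = ⊤ := (hW W hWinv).resolve_left hWne
  ext v
  have hv : v ∈ W := this ▸ Submodule.mem_top
  rw [Module.End.mem_eigenspace_iff] at hv
  simpa using hv

end Helpers
section Helpers2

variable {G : Type} [Group G] {g : G} {k : ℤ}
variable {V : Type} [AddCommGroup V] [Module ℂ V]

/-- Scalar units of `End`. -/
def sUnit : ℂˣ →* (V →ₗ[ℂ] V)ˣ :=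
  Units.map (algebraMap ℂ (V →ₗ[ℂ] V)).toMonoidHom

lemma sUnit_coe (c : ℂˣ) : ((sUnit c : (V →ₗ[ℂ] V)ˣ) : V →ₗ[ℂ] V) = (c : ℂ) • LinearMap.id := by
  show algebraMap ℂ (V →ₗ[ℂ] V) (c : ℂ) = _
  rw [Algebra.algebraMap_eq_smul_one]
  rfl

lemma sUnit_central (c : ℂˣ) (f : (V →ₗ[ℂ] V)ˣ) : sUnit c * f = f * sUnit c := by
  ext1
  rw [Units.val_mul, Units.val_mul]
  exact Algebra.commutes (c : ℂ) (f : V →ₗ[ℂ] V)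

/-- The product-group representation `(h, t) ↦ χ(t)·ρ(h)`. -/
def smashAux (rho : Subgroup.centralizer ({g} : Set G) →* (V →ₗ[ℂ] V)ˣ)
    (chi : Multiplicative ℝ →* ℂˣ) :
    (Subgroup.centralizer ({g} : Set G) × Multiplicative ℝ) →* (V →ₗ[ℂ] V)ˣ :=
  MonoidHom.mk' (fun x => sUnit (chi x.2) * rho x.1) (by
    intro x y
    rw [Prod.fst_mul, Prod.snd_mul, map_mul chi, map_mul sUnit, map_mul rho]
    rw [mul_assoc, ← mul_assoc (sUnit (chi y.2)), sUnit_central (chi y.2) (rho x.1),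
      mul_assoc, ← mul_assoc])

lemma smashAux_coe (rho : Subgroup.centralizer ({g} : Set G) →* (V →ₗ[ℂ] V)ˣ)
    (chi : Multiplicative ℝ →* ℂˣ) (h : Subgroup.centralizer ({g} : Set G)) (t : ℝ) :
    ((smashAux rho chi (h, Multiplicative.ofAdd t) : (V →ₗ[ℂ] V)ˣ) : V →ₗ[ℂ] V)
      = (chi (Multiplicative.ofAdd t) : ℂ) • (rho h : V →ₗ[ℂ] V) := by
  show ((sUnit (chi (Multiplicative.ofAdd t)) * rho h : (V →ₗ[ℂ] V)ˣ) : V →ₗ[ℂ] V) = _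
  rw [Units.val_mul, sUnit_coe, smul_mul_assoc, Module.End.mul_eq_comp, LinearMap.id_comp]

lemma smashAux_rel (rho : Subgroup.centralizer ({g} : Set G) →* (V →ₗ[ℂ] V)ˣ)
    (chi : Multiplicative ℝ →* ℂˣ) (hcond : SmashCondK g k rho chi) :
    ∀ x ∈ lambdaRel g k, smashAux rho chi x = 1 := by
  have key : smashAux rho chi (zElem g k) = 1 := by
    ext1
    show ((sUnit (chi (Multiplicative.ofAdd (-(k:ℝ)))) * rho (gElem g) : (V →ₗ[ℂ] V)ˣ) : V →ₗ[ℂ] V) = 1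
    rw [Units.val_mul, sUnit_coe, hcond, smul_mul_assoc, Module.End.mul_eq_comp,
      LinearMap.id_comp, smul_smul, ← Units.val_mul, ← map_mul, ← ofAdd_add]
    norm_num
    rfl
  intro x hx
  obtain ⟨m, rfl⟩ := Subgroup.mem_zpowers_iff.mp hx
  rw [map_zpow, key, one_zpow]

end Helpers2
section MainExtra

variable {G : Type} [Group G] {g : G} {k : ℤ}
variable {V : Type} [AddCommGroup V] [Module ℂ V]

lemma lmk_central (t : ℝ) (x : LambdaK G g k) : x * lmk 1 t = lmk 1 t * x := by
  obtain ⟨h, s, rfl⟩ := lmk_surj x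
  rw [lmk_mul, lmk_mul, mul_one, one_mul, add_comm]

lemma lmk_split (h : Subgroup.centralizer ({g} : Set G)) (t : ℝ) :
    (lmk h t : LambdaK G g k) = lmk h 0 * lmk 1 t := by
  rw [lmk_mul, mul_one, zero_add]

end MainExtra

/-- Every finite-dimensional irreducible representation of `Λ^k_G(g)`
is of the form `ρ ⊙ χ`, and `(ρ, χ) ↦ ρ ⊙ χ` is a bijection between pairs
(`ρ` an irreducible representation of `C_G(g)` up to isomorphism, `χ : ℝ → ℂˣ`
with `ρ(g) = χ(k)·id`) and isomorphism classes of finite-dimensional irreducible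
representations of `Λ^k_G(g)`. -/
theorem lambdaK_irreducibles_classified (G : Type) [Group G] [Finite G] (g : G)
    (k : ℤ) (hk : 1 ≤ k) :
    -- every irreducible representation of `Λ^k_G(g)` has the form `ρ ⊙ χ`
    (∀ (V : Type) [AddCommGroup V] [Module ℂ V] [FiniteDimensional ℂ V]
        (Rho : LambdaK G g k →* (V →ₗ[ℂ] V)ˣ), IsIrreducibleRep Rho →
        ∃ (rho : Subgroup.centralizer ({g} : Set G) →* (V →ₗ[ℂ] V)ˣ)
          (chi : Multiplicative ℝ →* ℂˣ),
          IsIrreducibleRep rho ∧ SmashCondK g k rho chi ∧ SmashEqK Rho rho chi) ∧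
    -- the assignment is well defined and lands in irreducibles
    (∀ (V : Type) [AddCommGroup V] [Module ℂ V] [FiniteDimensional ℂ V]
        (rho : Subgroup.centralizer ({g} : Set G) →* (V →ₗ[ℂ] V)ˣ)
        (chi : Multiplicative ℝ →* ℂˣ),
        IsIrreducibleRep rho → SmashCondK g k rho chi →
        ∃ Rho : LambdaK G g k →* (V →ₗ[ℂ] V)ˣ,
          SmashEqK Rho rho chi ∧
          IsIrreducibleRep Rho ∧
          ∀ Rho' : LambdaK G g k →* (V →ₗ[ℂ] V)ˣ, SmashEqK Rho' rho chi → Rho' = Rho) ∧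
    -- injectivity on isomorphism classes
    (∀ (V V' : Type) [AddCommGroup V] [Module ℂ V] [FiniteDimensional ℂ V]
        [AddCommGroup V'] [Module ℂ V'] [FiniteDimensional ℂ V']
        (rho : Subgroup.centralizer ({g} : Set G) →* (V →ₗ[ℂ] V)ˣ)
        (rho' : Subgroup.centralizer ({g} : Set G) →* (V' →ₗ[ℂ] V')ˣ)
        (chi chi' : Multiplicative ℝ →* ℂˣ)
        (Rho : LambdaK G g k →* (V →ₗ[ℂ] V)ˣ) (Rho' : LambdaK G g k →* (V' →ₗ[ℂ] V')ˣ),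
        IsIrreducibleRep rho → IsIrreducibleRep rho' →
        SmashCondK g k rho chi → SmashCondK g k rho' chi' →
        SmashEqK Rho rho chi → SmashEqK Rho' rho' chi' →
        RepIso Rho Rho' → RepIso rho rho' ∧ chi = chi') := by
  refine ⟨?_, ?_, ?_⟩
  · -- PART 1
    intro V _ _ _ Rho hirr
    obtain ⟨v0, hv0⟩ := hirr.1
    set rho : Subgroup.centralizer ({g} : Set G) →* (V →ₗ[ℂ] V)ˣ :=
      Rho.comp ((QuotientGroup.mk' (lambdaRel g k)).comp (MonoidHom.inl _ _)) with hrho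
    have hrho_eq : ∀ h, rho h = Rho (lmk h 0) := fun h => rfl
    have hex : ∀ t : ℝ, ∃ c : ℂ,
        ((Rho (lmk 1 t) : (V →ₗ[ℂ] V)ˣ) : V →ₗ[ℂ] V) = c • LinearMap.id := by
      intro t
      apply schur_scalar Rho hirr
      intro m
      rw [← Module.End.mul_eq_comp, ← Module.End.mul_eq_comp, ← Units.val_mul, ← Units.val_mul,
        ← map_mul, ← map_mul, lmk_central t m]
    choose cf hcf using hex
    have hcne : ∀ t, cf t ≠ 0 := by
      intro t h0
      have h1 : ((Rho (lmk 1 t) : (V →ₗ[ℂ] V)ˣ) : V →ₗ[ℂ] V) * ↑(Rho (lmk 1 t))⁻¹ = 1 :=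
        Units.mul_inv _
      rw [hcf t, h0, zero_smul, zero_mul] at h1
      have h2 := congrArg (fun f : V →ₗ[ℂ] V => f v0) h1
      simp only [LinearMap.zero_apply, Module.End.one_apply] at h2
      exact hv0 h2.symm
    have hmul : ∀ s t : ℝ, cf (s + t) = cf s * cf t := by
      intro s t
      have h1 : (lmk (1 : Subgroup.centralizer ({g} : Set G)) (s + t) : LambdaK G g k)
          = lmk 1 s * lmk 1 t := by rw [lmk_mul, one_mul]
      have h2 := hcf (s + t)
      rw [h1, map_mul, Units.val_mul, hcf s, hcf t] at h2
      have h3 := congrArg (fun f : V →ₗ[ℂ] V => f v0) h2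
      simp only [Module.End.mul_apply, LinearMap.smul_apply, LinearMap.id_apply,
        smul_smul] at h3
      exact (smul_vec_eq hv0 h3).symm
    set chi : Multiplicative ℝ →* ℂˣ :=
      MonoidHom.mk' (fun t => Units.mk0 (cf t.toAdd) (hcne _)) (by
        intro a b
        apply Units.ext
        show cf (a * b).toAdd = cf a.toAdd * cf b.toAdd
        rw [toAdd_mul, hmul]) with hchi
    have hchi_coe : ∀ t : ℝ, (chi (Multiplicative.ofAdd t) : ℂ) = cf t := fun t => rfl
    have hsmash : SmashEqK Rho rho chi := by
      intro h t
      rw [lmk_split h t, map_mul, Units.val_mul, hcf t, mul_smul_comm,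
        ← Module.End.one_eq_id, mul_one, hchi_coe, hrho_eq]
    refine ⟨rho, chi, ⟨⟨v0, hv0⟩, ?_⟩, ?_, hsmash⟩
    · intro W hWinv
      apply hirr.2 W
      intro m v hv
      obtain ⟨h, t, rfl⟩ := lmk_surj m
      have := congrArg (fun f : V →ₗ[ℂ] V => f v) (hsmash h t)
      simp only [LinearMap.smul_apply] at this
      rw [this]
      exact Submodule.smul_mem _ _ (hWinv h v hv)
    · show ((rho (gElem g) : (V →ₗ[ℂ] V)ˣ) : V →ₗ[ℂ] V) = _
      rw [hrho_eq, lmk_g, hcf, hchi_coe]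
  · -- PART 2
    intro V _ _ _ rho chi hirr hcond
    set Rho : LambdaK G g k →* (V →ₗ[ℂ] V)ˣ :=
      QuotientGroup.lift _ (smashAux rho chi) (smashAux_rel rho chi hcond) with hRho
    have hsmash : SmashEqK Rho rho chi := by
      intro h t
      show ((smashAux rho chi (h, Multiplicative.ofAdd t) : (V →ₗ[ℂ] V)ˣ) : V →ₗ[ℂ] V) = _
      exact smashAux_coe rho chi h t
    refine ⟨Rho, hsmash, ⟨hirr.1, ?_⟩, ?_⟩
    · intro W hWinv
      apply hirr.2 W
      intro h v hv
      have h0 := congrArg (fun f : V →ₗ[ℂ] V => f v) (hsmash h 0)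
      simp only [ofAdd_zero, map_one, Units.val_one, one_smul, LinearMap.smul_apply] at h0
      rw [← h0]
      exact hWinv (lmk h 0) v hv
    · intro Rho' h'
      apply MonoidHom.ext
      intro x
      obtain ⟨h, t, rfl⟩ := lmk_surj x
      exact Units.ext ((h' h t).trans (hsmash h t).symm)
  · -- PART 3
    intro V V' _ _ _ _ _ _ rho rho' chi chi' Rho Rho' hirr hirr' hc hc' hs hs' hiso
    obtain ⟨e, he⟩ := hiso
    constructor
    · refine ⟨e, fun h v => ?_⟩
      have h1 := he (lmk h 0) v
      have e1 := congrArg (fun f : V →ₗ[ℂ] V => f v) (hs h 0)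
      have e2 := congrArg (fun f : V' →ₗ[ℂ] V' => f (e v)) (hs' h 0)
      simp only [ofAdd_zero, map_one, Units.val_one, one_smul, LinearMap.smul_apply] at e1 e2
      rw [e1, e2] at h1
      exact h1
    · apply MonoidHom.ext
      intro t
      apply Units.ext
      obtain ⟨v0, hv0⟩ := hirr.1
      have hev0 : e v0 ≠ 0 := fun hz => hv0 (by
        have := e.injective (hz.trans (map_zero e).symm)
        simpa using this)
      have h1 := he (lmk 1 t.toAdd) v0
      have e1 := congrArg (fun f : V →ₗ[ℂ] V => f v0) (hs 1 t.toAdd)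
      have e2 := congrArg (fun f : V' →ₗ[ℂ] V' => f (e v0)) (hs' 1 t.toAdd)
      simp only [map_one, Units.val_one, LinearMap.smul_apply, Module.End.one_apply,
        ofAdd_toAdd] at e1 e2
      rw [e1, e2, map_smul] at h1
      exact smul_vec_eq hev0 h1

end
end

section
/- For finite groups G and H and elements σ ∈ G, τ ∈ H, the map [(α, β), t] ↦ ([α, t], [β, t]) is a group isomorphism from Λ_{G×H}((σ, τ)) onto the fiber product Λ_G(σ) ×_{ℝ/ℤ} Λ_H(τ) := {(x, y) ∈ Λ_G(σ) × Λ_H(τ) : π(x) = π(y)}, where π denotes the projection [h, t] ↦ t mod ℤ on each factor. (Here one uses that C_{G×H}((σ, τ)) = C_G(σ) × C_H(τ).) -/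
noncomputable section

/-- `ℝ → ℝ/ℤ` as a monoid hom of multiplicative groups. -/
def circleHom : Multiplicative ℝ →* Multiplicative (AddCircle (1 : ℝ)) :=
  AddMonoidHom.toMultiplicative (QuotientAddGroup.mk' (AddSubgroup.zmultiples (1 : ℝ)))

/-- `(h, t) ↦ t mod ℤ` on `C_G(g) × ℝ`. -/
def piPre (G : Type) [Group G] (g : G) :
    (Subgroup.centralizer ({g} : Set G) × Multiplicative ℝ) →*
      Multiplicative (AddCircle (1 : ℝ)) :=
  circleHom.comp (MonoidHom.snd _ _)

theorem piPre_ker (G : Type) [Group G] (g : G) : lambdaRel g 1 ≤ (piPre G g).ker := by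
  intro x hx
  rw [lambdaRel, Subgroup.mem_zpowers_iff] at hx
  obtain ⟨m, rfl⟩ := hx
  rw [MonoidHom.mem_ker, map_zpow]
  have hz : piPre G g (zElem g 1) = 1 := by
    show Multiplicative.ofAdd (((-(1:ℤ) : ℝ) : AddCircle (1:ℝ))) = 1
    have : ((-(1:ℤ) : ℝ) : AddCircle (1:ℝ)) = 0 := by
      push_cast
      rw [show ((-1 : ℝ) : AddCircle (1:ℝ)) = -((1:ℝ) : AddCircle (1:ℝ)) by
        exact (QuotientAddGroup.mk_neg _ _), AddCircle.coe_period, neg_zero]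
    rw [this]; rfl
  rw [hz, one_zpow]

/-- The map `π : Λ_G(g) → ℝ/ℤ`, `[h,t] ↦ t mod ℤ`. -/
def piHom (G : Type) [Group G] (g : G) :
    Lambda G g →* Multiplicative (AddCircle (1 : ℝ)) :=
  QuotientGroup.lift _ (piPre G g) (piPre_ker G g)

/-- The map `ι : C_G(g) → Λ_G(g)`, `h ↦ [h, 0]`. -/
def iotaHom (G : Type) [Group G] (g : G) :
    Subgroup.centralizer ({g} : Set G) →* Lambda G g :=
  (QuotientGroup.mk' (lambdaRel g 1)).comp (MonoidHom.inl _ _)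

theorem fst_mem_centralizer {G H : Type} [Group G] [Group H] {s : G} {t : H}
    (a : Subgroup.centralizer ({(s, t)} : Set (G × H))) :
    (a : G × H).1 ∈ Subgroup.centralizer ({s} : Set G) := by
  rw [Subgroup.mem_centralizer_iff]
  rintro x rfl
  have h := Subgroup.mem_centralizer_iff.mp a.2 (x, t) rfl
  exact congrArg Prod.fst h

theorem snd_mem_centralizer {G H : Type} [Group G] [Group H] {s : G} {t : H}
    (a : Subgroup.centralizer ({(s, t)} : Set (G × H))) :
    (a : G × H).2 ∈ Subgroup.centralizer ({t} : Set H) := by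
  rw [Subgroup.mem_centralizer_iff]
  rintro x rfl
  have h := Subgroup.mem_centralizer_iff.mp a.2 (s, x) rfl
  exact congrArg Prod.snd h

/-- The fiber product `Λ_G(σ) ×_{ℝ/ℤ} Λ_H(τ)`. -/
def lambdaFiberProd (G H : Type) [Group G] [Group H] (s : G) (t : H) :
    Subgroup (Lambda G s × Lambda H t) where
  carrier := {p | piHom G s p.1 = piHom H t p.2}
  mul_mem' := by
    intro a b ha hb
    simp only [Set.mem_setOf_eq] at *
    show piHom G s (a.1 * b.1) = piHom H t (a.2 * b.2)
    rw [map_mul, map_mul, ha, hb]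
  one_mem' := by
    simp only [Set.mem_setOf_eq]
    show piHom G s 1 = piHom H t 1
    rw [map_one, map_one]
  inv_mem' := by
    intro a ha
    simp only [Set.mem_setOf_eq] at *
    show piHom G s a.1⁻¹ = piHom H t a.2⁻¹
    rw [map_inv, map_inv, ha]

/-- Projection `C_{G×H}((s,t)) →* C_G(s)`. -/
def cFst {G H : Type} [Group G] [Group H] (s : G) (t : H) :
    Subgroup.centralizer ({(s, t)} : Set (G × H)) →* Subgroup.centralizer ({s} : Set G) where
  toFun a := ⟨(a : G × H).1, fst_mem_centralizer a⟩
  map_one' := rfl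
  map_mul' _ _ := rfl

/-- Projection `C_{G×H}((s,t)) →* C_H(t)`. -/
def cSnd {G H : Type} [Group G] [Group H] (s : G) (t : H) :
    Subgroup.centralizer ({(s, t)} : Set (G × H)) →* Subgroup.centralizer ({t} : Set H) where
  toFun a := ⟨(a : G × H).2, snd_mem_centralizer a⟩
  map_one' := rfl
  map_mul' _ _ := rfl

theorem prod_mem_centralizer {G H : Type} [Group G] [Group H] {s : G} {t : H}
    {x : G} {y : H} (hx : x ∈ Subgroup.centralizer ({s} : Set G))
    (hy : y ∈ Subgroup.centralizer ({t} : Set H)) :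
    (x, y) ∈ Subgroup.centralizer ({(s, t)} : Set (G × H)) := by
  rw [Subgroup.mem_centralizer_iff]
  rintro z rfl
  exact Prod.ext (Subgroup.mem_centralizer_iff.mp hx s rfl)
    (Subgroup.mem_centralizer_iff.mp hy t rfl)

/-- The combined map `C_{G×H}((s,t)) × ℝ →* Λ_G(s) × Λ_H(t)`. -/
def FFmap (G H : Type) [Group G] [Group H] (s : G) (t : H) :
    (Subgroup.centralizer ({(s, t)} : Set (G × H)) × Multiplicative ℝ) →*
      Lambda G s × Lambda H t :=
  (((QuotientGroup.mk' (lambdaRel s 1)).comp ((cFst s t).prodMap (MonoidHom.id _))).prod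
   (((QuotientGroup.mk' (lambdaRel t 1)).comp ((cSnd s t).prodMap (MonoidHom.id _)))))

theorem FFmap_mem (G H : Type) [Group G] [Group H] (s : G) (t : H)
    (x : Subgroup.centralizer ({(s, t)} : Set (G × H)) × Multiplicative ℝ) :
    FFmap G H s t x ∈ lambdaFiberProd G H s t := by
  show piHom G s _ = piHom H t _
  rfl

theorem prod_zpow {M N : Type} [Group M] [Group N] (x : M) (y : N) (m : ℤ) :
    (x, y) ^ m = (x ^ m, y ^ m) := rfl

theorem zElem_zpow {G : Type} [Group G] (g : G) (m : ℤ) :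
    (zElem g 1) ^ m = ((gElem g) ^ m, Multiplicative.ofAdd (-(m : ℝ))) := by
  apply Prod.ext
  · rfl
  · show (Multiplicative.ofAdd (-((1 : ℤ) : ℝ))) ^ m = _
    rw [← ofAdd_zsmul]
    congr 1
    rw [zsmul_eq_mul]
    push_cast
    ring

/-- `[(α, β), t] ↦ ([α, t], [β, t])` is a group isomorphism
`Λ_{G×H}((σ,τ)) ≅ Λ_G(σ) ×_{ℝ/ℤ} Λ_H(τ)`. -/
theorem lambda_prod_iso_fiberProd (G H : Type) [Group G] [Group H] [Finite G] [Finite H]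
    (s : G) (t : H) :
    ∃ e : Lambda (G × H) (s, t) ≃* lambdaFiberProd G H s t,
      ∀ (a : Subgroup.centralizer ({(s, t)} : Set (G × H))) (r : ℝ),
        ((e (lmk a r) : Lambda G s × Lambda H t)) =
          (lmk ⟨(a : G × H).1, fst_mem_centralizer a⟩ r,
           lmk ⟨(a : G × H).2, snd_mem_centralizer a⟩ r) := by
  set F' : (Subgroup.centralizer ({(s, t)} : Set (G × H)) × Multiplicative ℝ) →*
      lambdaFiberProd G H s t :=
    (FFmap G H s t).codRestrict _ (FFmap_mem G H s t) with hF'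
  have hker : lambdaRel (s, t) 1 ≤ F'.ker := by
    rw [lambdaRel, Subgroup.zpowers_le, MonoidHom.mem_ker]
    apply Subtype.ext
    apply Prod.ext
    · exact (QuotientGroup.eq_one_iff _).mpr (Subgroup.mem_zpowers (zElem s 1))
    · exact (QuotientGroup.eq_one_iff _).mpr (Subgroup.mem_zpowers (zElem t 1))
  set Φ : Lambda (G × H) (s, t) →* lambdaFiberProd G H s t :=
    QuotientGroup.lift _ F' hker with hΦ
  have hinj : Function.Injective Φ := by
    rw [injective_iff_map_eq_one]
    intro q hq
    induction q using QuotientGroup.induction_on with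
    | H x =>
      obtain ⟨a, u⟩ := x
      have h1 : QuotientGroup.mk (s := lambdaRel s 1) (cFst s t a, u) = 1 :=
        congrArg Prod.fst (congrArg Subtype.val hq)
      have h2 : QuotientGroup.mk (s := lambdaRel t 1) (cSnd s t a, u) = 1 :=
        congrArg Prod.snd (congrArg Subtype.val hq)
      rw [QuotientGroup.eq_one_iff] at h1 h2
      obtain ⟨m, hm⟩ := Subgroup.mem_zpowers_iff.mp h1
      obtain ⟨k, hk⟩ := Subgroup.mem_zpowers_iff.mp h2
      rw [zElem_zpow, Prod.mk.injEq] at hm hk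
      obtain ⟨hm1, hm2⟩ := hm
      obtain ⟨hk1, hk2⟩ := hk
      have hmk : m = k := by
        have h := hm2.trans hk2.symm
        have : (-(m : ℝ)) = -(k : ℝ) := congrArg Multiplicative.toAdd h
        exact_mod_cast neg_injective this
      subst hmk
      apply (QuotientGroup.eq_one_iff (a, u)).mpr
      refine Subgroup.mem_zpowers_iff.mpr ⟨m, ?_⟩
      rw [zElem_zpow]
      apply Prod.ext
      · apply Subtype.ext
        have e1 : s ^ m = (a : G × H).1 := by
          simpa [gElem, cFst] using congrArg Subtype.val hm1
        have e2 : t ^ m = (a : G × H).2 := by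
          simpa [gElem, cSnd] using congrArg Subtype.val hk1
        show ((s, t) : G × H) ^ m = (a : G × H)
        rw [prod_zpow]
        exact Prod.ext e1 e2
      · exact hm2
  have hsurj : Function.Surjective Φ := by
    rintro ⟨⟨p1, p2⟩, hp⟩
    induction p1 using QuotientGroup.induction_on with
    | H x1 =>
      induction p2 using QuotientGroup.induction_on with
      | H x2 =>
        obtain ⟨α, u⟩ := x1
        obtain ⟨β, v⟩ := x2
        have hp' : ((Multiplicative.toAdd u : ℝ) : AddCircle (1 : ℝ)) =
            ((Multiplicative.toAdd v : ℝ) : AddCircle (1 : ℝ)) :=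
          congrArg Multiplicative.toAdd hp
        have hsub : -Multiplicative.toAdd u + Multiplicative.toAdd v ∈
            AddSubgroup.zmultiples (1 : ℝ) := QuotientAddGroup.eq.mp hp'
        obtain ⟨n, hn⟩ := AddSubgroup.mem_zmultiples_iff.mp hsub
        have hn' : -Multiplicative.toAdd u + Multiplicative.toAdd v = (n : ℝ) := by
          rw [← hn, zsmul_eq_mul]; ring
        refine ⟨QuotientGroup.mk
          (⟨((α : G), ((β * (gElem t) ^ n : Subgroup.centralizer ({t} : Set H)) : H)),
            prod_mem_centralizer α.2 (β * (gElem t) ^ n).2⟩, u), ?_⟩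
        apply Subtype.ext
        apply Prod.ext
        · show QuotientGroup.mk _ = QuotientGroup.mk (α, u)
          exact congrArg _ (Prod.ext (Subtype.ext rfl) rfl)
        · show QuotientGroup.mk (s := lambdaRel t 1)
            (β * (gElem t) ^ n, u) = QuotientGroup.mk (β, v)
          have heq : ((β * (gElem t) ^ n, u) :
              Subgroup.centralizer ({t} : Set H) × Multiplicative ℝ) =
              (β, v) * (zElem t 1) ^ n := by
            rw [zElem_zpow]
            apply Prod.ext
            · rfl
            · show u = v * Multiplicative.ofAdd (-(n : ℝ))
              rw [← ofAdd_toAdd v, ← ofAdd_add, ← ofAdd_toAdd u]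
              congr 1
              linarith
          rw [heq]
          exact QuotientGroup.mk_mul_of_mem _ (Subgroup.zpow_mem_zpowers _ n)
  refine ⟨MulEquiv.ofBijective Φ ⟨hinj, hsurj⟩, fun a r => rfl⟩

end
end
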